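/- arXiv:math/9312204 — 2 statements merged into one kernel-verified Lean document; each statement's English description precedes it below -/
import Mathlib

section
/- Every filter on ω with the strong Baire property is hereditarily meager. -/
open Set Filter

/-- The characteristic function of a set, viewing `𝒫(α)` inside the Cantor space `α → Bool`. -/
noncomputable def chi {α : Type*} (X : Set α) : α → Bool :=
  fun n => @decide (n ∈ X) (Classical.propDecidable _)

/-- A family of subsets of `α` viewed as a subset of the Cantor space `α → Bool`. -/
noncomputable def toCantor {α : Type*} (A : Set (Set α)) : Set (α → Bool) := chi '' A

/-- A family of subsets of `α` is meager if it is meager as a subset of the Cantor space. -/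
def MeagerFamily {α : Type*} (A : Set (Set α)) : Prop := IsMeagre (toCantor A)

/-- A family of subsets of `α` has the Baire property if, viewed in the Cantor space,
it differs from an open set by a meager set. -/
def HasBP {α : Type*} (A : Set (Set α)) : Prop :=
  ∃ U : Set (α → Bool), IsOpen U ∧ IsMeagre (symmDiff (toCantor A) U)

/-- `A` has the Baire property relative to `C ⊆ 2^α`: the trace of `A` on `C` differs from a
relatively open subset of `C` by a set meager in `C`. -/
def RelBP {α : Type*} (A : Set (Set α)) (C : Set (α → Bool)) : Prop :=
  ∃ O : Set C, IsOpen O ∧ IsMeagre (symmDiff (Subtype.val ⁻¹' (toCantor A)) O)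

/-- Talagrand's strong Baire property: the filter has the Baire property relative to
every closed subset of the Cantor space. -/
def StrongBP {α : Type*} (F : Filter α) : Prop :=
  ∀ C : Set (α → Bool), IsClosed C → RelBP F.sets C

/-- `F⁺`: the sets whose complement is not in `F`, i.e. the sets compatible with `F`. -/
def Fplus {α : Type*} (F : Filter α) : Set (Set α) := {X | Xᶜ ∉ F}

/-- `F` is completely meager if for every `X ∈ F⁺` the filter generated by `F ∪ {X}` is meager. -/
def CompletelyMeager {α : Type*} (F : Filter α) : Prop :=
  ∀ X ∈ Fplus F, MeagerFamily (F ⊓ 𝓟 X).sets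

/-- `F` is weakly hereditarily meager if for every `f`, either some fiber `f⁻¹(i)` is
compatible with `F`, or the image filter `f(F)` is meager. -/
def WeaklyHereditarilyMeager {α : Type*} (F : Filter α) : Prop :=
  ∀ f : α → ℕ, (∃ i : ℕ, f ⁻¹' {i} ∈ Fplus F) ∨ MeagerFamily (Filter.map f F).sets

/-- `F` is hereditarily meager if for every `f`, the image filter `f(F)` either contains
a finite set (is improper) or is meager. -/
def HereditarilyMeager {α : Type*} (F : Filter α) : Prop :=
  ∀ f : α → ℕ, (∃ Y ∈ Filter.map f F, Y.Finite) ∨ MeagerFamily (Filter.map f F).sets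

/-- `F` is a P⁺-filter: every ⊆*-decreasing sequence from `F⁺` has a pseudo-intersection in `F⁺`. -/
def PPlusFilter {α : Type*} (F : Filter α) : Prop :=
  ∀ X : ℕ → Set α, (∀ n, X n ∈ Fplus F) → (∀ n, (X (n + 1) \ X n).Finite) →
    ∃ Y ∈ Fplus F, ∀ n, (Y \ X n).Finite

/-- `F` is a strong P⁺-filter: for every sequence from `F⁺` there is `f : ω → ω` such that
every `Y ∈ F` meets `Xₙ ∩ [0, f(n))` for all but finitely many `n`. -/
def StrongPPlusFilter (F : Filter ℕ) : Prop :=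
  ∀ X : ℕ → Set ℕ, (∀ n, X n ∈ Fplus F) →
    ∃ f : ℕ → ℕ, ∀ Y ∈ F, ∀ᶠ n in Filter.atTop, (Y ∩ X n ∩ Set.Iio (f n)).Nonempty

/-- `F` is an Fσ filter: as a subset of Cantor space it is a countable union of closed sets. -/
def IsFsigmaFilter (F : Filter ℕ) : Prop :=
  ∃ C : ℕ → Set (ℕ → Bool), (∀ n, IsClosed (C n)) ∧ toCantor F.sets = ⋃ n, C n

/-- An almost disjoint family: an infinite family of infinite sets with pairwise finite
intersections. -/
def ADFamily (𝒜 : Set (Set ℕ)) : Prop :=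
  𝒜.Infinite ∧ (∀ A ∈ 𝒜, A.Infinite) ∧
    ∀ A ∈ 𝒜, ∀ B ∈ 𝒜, A ≠ B → (A ∩ B).Finite

/-- A maximal almost disjoint family. -/
def MadFamily (𝒜 : Set (Set ℕ)) : Prop :=
  ADFamily 𝒜 ∧ ∀ X : Set ℕ, X.Infinite → ∃ A ∈ 𝒜, (X ∩ A).Infinite

/-- `F(𝒜)`: the filter generated by the complements of members of `𝒜` and the cofinite sets. -/
def madFilter (𝒜 : Set (Set ℕ)) : Filter ℕ :=
  Filter.cofinite ⊓ ⨅ A ∈ 𝒜, 𝓟 Aᶜ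

/-- `I(𝒜)`: the ideal generated by `𝒜`, i.e. sets covered by finitely many members of `𝒜`
together with a finite set. -/
def madIdeal (𝒜 : Set (Set ℕ)) : Set (Set ℕ) :=
  {X | ∃ s : Finset (Set ℕ), ↑s ⊆ 𝒜 ∧ (X \ ⋃ A ∈ s, (A : Set ℕ)).Finite}

/-- The Fubini product `F ⊗ G` of two filters. -/
def tensor {α β : Type*} (F : Filter α) (G : Filter β) : Filter (α × β) where
  sets := {X | {n | {m | (n, m) ∈ X} ∈ G} ∈ F}
  univ_sets := by simp
  sets_of_superset := by
    intro X Y hX hXY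
    simp only [Set.mem_setOf_eq] at *
    filter_upwards [hX] with n hn
    filter_upwards [hn] with m hm
    exact hXY hm
  inter_sets := by
    intro X Y hX hY
    simp only [Set.mem_setOf_eq] at *
    filter_upwards [hX, hY] with n h1 h2
    filter_upwards [h1, h2] with m hm1 hm2
    exact ⟨hm1, hm2⟩

/-- A dominating family of functions. -/
def Dominating (D : Set (ℕ → ℕ)) : Prop :=
  ∀ g : ℕ → ℕ, ∃ f ∈ D, ∀ᶠ n in Filter.atTop, g n ≤ f n

/-- The dominating number `𝔡`. -/
noncomputable def frakD : Cardinal :=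
  sInf {c : Cardinal | ∃ D : Set (ℕ → ℕ), Dominating D ∧ Cardinal.mk D = c}


section Aux8
open Set Filter Topology
open scoped Classical


lemma chi_apply_iff {α : Type*} (X : Set α) (n : α) : chi X n = true ↔ n ∈ X := by
  simp [chi]

lemma chi_setOf {α : Type*} (ψ : α → Bool) : chi {n | ψ n = true} = ψ := by
  funext n
  rw [Bool.eq_iff_iff, chi_apply_iff]
  exact Iff.rfl

lemma mem_toCantor {α : Type*} (A : Set (Set α)) (ψ : α → Bool) :
    ψ ∈ toCantor A ↔ {n | ψ n = true} ∈ A := by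
  constructor
  · rintro ⟨X, hX, rfl⟩
    convert hX using 2
    ext n; exact chi_apply_iff X n
  · intro hmem
    exact ⟨_, hmem, chi_setOf ψ⟩

-- preimage of meager under continuous open map is meager
lemma isMeagre_preimage {X Y : Type*} [TopologicalSpace X] [TopologicalSpace Y]
    {f : X → Y} (hc : Continuous f) (ho : IsOpenMap f) {s : Set Y} (hs : IsMeagre s) :
    IsMeagre (f ⁻¹' s) := by
  rw [isMeagre_iff_countable_union_isNowhereDense] at hs ⊢
  obtain ⟨S, hnwd, hcnt, hsub⟩ := hs
  refine ⟨(fun t => f ⁻¹' closure t) '' S, ?_, hcnt.image _, ?_⟩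
  · rintro t ⟨u, hu, rfl⟩
    have hclosed : IsClosed (f ⁻¹' closure u) := isClosed_closure.preimage hc
    rw [hclosed.isNowhereDense_iff]
    by_contra hne
    obtain ⟨x, hx⟩ := nonempty_iff_ne_empty.mpr hne
    have himg : f '' interior (f ⁻¹' closure u) ⊆ closure u := by
      refine (image_mono (f := f) interior_subset).trans ?_
      rw [image_preimage_eq_inter_range]; exact inter_subset_left
    have hopen : IsOpen (f '' interior (f ⁻¹' closure u)) := ho _ isOpen_interior
    have : f x ∈ interior (closure u) :=
      interior_maximal himg hopen (mem_image_of_mem f hx)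
    have hn := hnwd u hu
    rw [IsNowhereDense] at hn
    rw [hn] at this
    exact this
  · intro x hx
    obtain ⟨u, hu, hxu⟩ := hsub hx
    exact mem_sUnion.mpr ⟨f ⁻¹' closure u, mem_image_of_mem _ hu,
      mem_preimage.mpr (subset_closure hxu)⟩

lemma not_isMeagre_of_isOpen' {X : Type*} [TopologicalSpace X] [BaireSpace X]
    {s : Set X} (h : IsOpen s) (hne : s.Nonempty) : ¬ IsMeagre s := by
  intro hm
  have hd := dense_of_mem_residual hm
  obtain ⟨x, hx, hx'⟩ := hd.inter_open_nonempty s h hne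
  exact hx' hx

section emb
variable (f : ℕ → ℕ)

noncomputable def iotaMap (χ : ℕ → Bool) : ℕ → Bool := χ ∘ f

def Cset : Set (ℕ → Bool) := {ψ | ∀ m m', f m = f m' → ψ m = ψ m'}

lemma range_iotaMap : Set.range (iotaMap f) = Cset f := by
  ext ψ
  constructor
  · rintro ⟨χ, rfl⟩ m m' hmm'
    simp only [iotaMap, Function.comp_apply, hmm']
  · intro hψ
    refine ⟨fun i => if hh : ∃ m, f m = i then ψ hh.choose else false, ?_⟩
    funext m
    have hh : ∃ m', f m' = f m := ⟨m, rfl⟩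
    simp only [iotaMap, Function.comp_apply, dif_pos hh]
    exact hψ _ _ hh.choose_spec

lemma isClosed_Cset : IsClosed (Cset f) := by
  have : Cset f = ⋂ p : ℕ × ℕ, {ψ : ℕ → Bool | f p.1 = f p.2 → ψ p.1 = ψ p.2} := by
    ext ψ
    simp only [Cset, mem_setOf_eq, mem_iInter, Prod.forall]
  rw [this]
  refine isClosed_iInter fun p => ?_
  by_cases hp : f p.1 = f p.2
  · simp only [hp, forall_true_left]
    have : {ψ : ℕ → Bool | ψ p.1 = ψ p.2}
        = (fun ψ : ℕ → Bool => (ψ p.1, ψ p.2)) ⁻¹' {q : Bool × Bool | q.1 = q.2} := rfl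
    rw [this]
    exact (isClosed_discrete _).preimage ((continuous_apply p.1).prodMk (continuous_apply p.2))
  · have : {ψ : ℕ → Bool | f p.1 = f p.2 → ψ p.1 = ψ p.2} = univ := by
      ext ψ; simp [hp]
    rw [this]; exact isClosed_univ

noncomputable def iotaC (χ : ℕ → Bool) : Cset f :=
  ⟨iotaMap f χ, by rw [← range_iotaMap]; exact mem_range_self χ⟩

lemma continuous_iotaC : Continuous (iotaC f) := by
  refine Continuous.subtype_mk (continuous_pi fun m => ?_) _
  exact continuous_apply (f m)

noncomputable def condSet (χ : ℕ → Bool) (i : ℕ) : Set (ℕ → Bool) :=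
  if hh : ∃ m, f m = i then {ψ : ℕ → Bool | ψ hh.choose = χ i} else univ

lemma isOpen_condSet (χ : ℕ → Bool) (i : ℕ) : IsOpen (condSet f χ i) := by
  unfold condSet
  by_cases hh : ∃ m, f m = i
  · simp only [dif_pos hh]
    have : {ψ : ℕ → Bool | ψ hh.choose = χ i} = (fun ψ : ℕ → Bool => ψ hh.choose) ⁻¹' {χ i} := rfl
    rw [this]
    exact (isOpen_discrete _).preimage (continuous_apply _)
  · simp only [dif_neg hh]; exact isOpen_univ

lemma isOpenMap_iotaC : IsOpenMap (iotaC f) := by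
  intro U hU
  rw [isOpen_iff_forall_mem_open]
  rintro ψC ⟨χ, hχU, rfl⟩
  obtain ⟨I, u, hIu, hpi⟩ := isOpen_pi_iff.mp hU χ hχU
  have hWopen : IsOpen ({ψ : ℕ → Bool | ∀ m ∈ I, ψ m = χ (f m)} ∩ ⋂ i ∈ I, condSet f χ i) := by
    refine IsOpen.inter ?_ (isOpen_biInter_finset fun i _ => isOpen_condSet f χ i)
    have : {ψ : ℕ → Bool | ∀ m ∈ I, ψ m = χ (f m)}
        = ⋂ m ∈ I, (fun ψ : ℕ → Bool => ψ m) ⁻¹' {χ (f m)} := by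
      ext ψ; simp
    rw [this]
    exact isOpen_biInter_finset fun m _ => (isOpen_discrete _).preimage (continuous_apply _)
  refine ⟨Subtype.val ⁻¹' ({ψ : ℕ → Bool | ∀ m ∈ I, ψ m = χ (f m)} ∩ ⋂ i ∈ I, condSet f χ i),
    ?_, hWopen.preimage continuous_subtype_val, ?_⟩
  · rintro ⟨ψ, hψC⟩ hmem
    have hψ1 : ∀ m ∈ I, ψ m = χ (f m) := hmem.1
    have hψ2 : ψ ∈ ⋂ i ∈ I, condSet f χ i := hmem.2
    have hψC' := hψC
    rw [← range_iotaMap] at hψC'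
    obtain ⟨χ₀, hχ₀⟩ := hψC'
    have hfc : ∀ m m', f m = f m' → ψ m = ψ m' := by
      intro m m' hmm'
      rw [← hχ₀]
      simp only [iotaMap, Function.comp_apply, hmm']
    refine ⟨fun i => if hh : ∃ m, f m = i then ψ hh.choose else χ i, ?_, ?_⟩
    · apply hpi
      intro a ha
      simp only [Finset.coe_mem]
      by_cases hh : ∃ m, f m = a
      · simp only [dif_pos hh]
        have h2 := mem_iInter₂.mp hψ2 a ha
        unfold condSet at h2
        simp only [dif_pos hh, mem_setOf_eq] at h2
        rw [h2]
        exact (hIu a ha).2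
      · simp only [dif_neg hh]
        exact (hIu a ha).2
    · apply Subtype.ext
      show iotaMap f (fun i => if hh : ∃ m, f m = i then ψ hh.choose else χ i) = ψ
      funext m
      have hh : ∃ m', f m' = f m := ⟨m, rfl⟩
      simp only [iotaMap, Function.comp_apply, dif_pos hh]
      exact hfc _ _ hh.choose_spec
  · constructor
    · intro m _; rfl
    · refine mem_iInter₂.mpr fun i hi => ?_
      unfold condSet
      by_cases hh : ∃ m, f m = i
      · simp only [dif_pos hh, mem_setOf_eq]
        show χ (f hh.choose) = χ i
        rw [hh.choose_spec]
      · simp only [dif_neg hh]; exact mem_univ _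

end emb

lemma isMeagre_union' {X : Type*} [TopologicalSpace X] {s t : Set X}
    (hs : IsMeagre s) (ht : IsMeagre t) : IsMeagre (s ∪ t) := by
  rw [IsMeagre, compl_union]
  exact Filter.inter_mem hs ht

def flipOut (I : Finset ℕ) (χ : ℕ → Bool) : ℕ → Bool := fun n => if n ∈ I then χ n else !χ n

lemma flipOut_invol (I : Finset ℕ) (χ : ℕ → Bool) : flipOut I (flipOut I χ) = χ := by
  funext n
  unfold flipOut
  by_cases hn : n ∈ I <;> simp [hn]

lemma continuous_flipOut (I : Finset ℕ) : Continuous (flipOut I) := by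
  refine continuous_pi fun n => ?_
  show Continuous fun χ : ℕ → Bool => if n ∈ I then χ n else !χ n
  by_cases hn : n ∈ I
  · simp only [if_pos hn]; exact continuous_apply n
  · simp only [if_neg hn]
    exact (continuous_of_discreteTopology (α := Bool) (β := Bool) (f := Bool.not)).comp
      (continuous_apply n)

noncomputable def flipHomeo (I : Finset ℕ) : (ℕ → Bool) ≃ₜ (ℕ → Bool) where
  toFun := flipOut I
  invFun := flipOut I
  left_inv := flipOut_invol I
  right_inv := flipOut_invol I
  continuous_toFun := continuous_flipOut I
  continuous_invFun := continuous_flipOut I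

end Aux8

/-- Every filter on `ω` with the strong Baire property is hereditarily meager. -/
theorem stmt8 (F : Filter ℕ) (hF : Filter.cofinite ≤ F) (h : StrongBP F) :
    HereditarilyMeager F := by
  intro f
  obtain ⟨O, hOopen, hM⟩ := h (Cset f) (isClosed_Cset f)
  set A := toCantor (Filter.map f F).sets with hA
  have hAeq : A = iotaC f ⁻¹' (Subtype.val ⁻¹' (toCantor F.sets)) := by
    ext χ
    simp only [mem_preimage, hA]
    rw [mem_toCantor, mem_toCantor]
    exact Iff.rfl
  set V := iotaC f ⁻¹' O with hV
  have hVopen : IsOpen V := hOopen.preimage (continuous_iotaC f)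
  have hADV : IsMeagre (symmDiff A V) := by
    rw [hAeq, hV, ← Set.preimage_symmDiff]
    exact isMeagre_preimage (continuous_iotaC f) (isOpenMap_iotaC f) hM
  by_cases hm : IsMeagre A
  · exact Or.inr hm
  · left
    have hVne : V.Nonempty := by
      rw [nonempty_iff_ne_empty]
      intro hVe
      apply hm
      refine hADV.mono fun x hx => ?_
      rw [Set.symmDiff_def, hVe]
      exact Or.inl ⟨hx, notMem_empty x⟩
    obtain ⟨χ₀, hχ₀⟩ := hVne
    obtain ⟨I, u, hIu, hpi⟩ := isOpen_pi_iff.mp hVopen χ₀ hχ₀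
    set cyl := {ψ : ℕ → Bool | ∀ a ∈ I, ψ a = χ₀ a} with hcyl
    have hcylV : cyl ⊆ V := by
      intro ψ hψ
      apply hpi
      intro a ha
      rw [hψ a ha]
      exact (hIu a ha).2
    have hcylopen : IsOpen cyl := by
      have : cyl = ⋂ a ∈ I, (fun ψ : ℕ → Bool => ψ a) ⁻¹' {χ₀ a} := by
        ext ψ; simp [hcyl]
      rw [this]
      exact isOpen_biInter_finset fun a _ => (isOpen_discrete _).preimage (continuous_apply a)
    have h1 : IsMeagre (cyl \ A) := by
      refine hADV.mono fun x hx => ?_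
      rw [Set.symmDiff_def]
      exact Or.inr ⟨hcylV hx.1, hx.2⟩
    have h2 : IsMeagre (cyl \ (flipOut I ⁻¹' A)) := by
      have heq : cyl \ flipOut I ⁻¹' A = flipOut I ⁻¹' (cyl \ A) := by
        ext ψ
        simp only [mem_diff, mem_preimage, hcyl, mem_setOf_eq]
        constructor
        · rintro ⟨hc, hna⟩
          refine ⟨fun a ha => ?_, hna⟩
          show (if a ∈ I then ψ a else !ψ a) = χ₀ a
          rw [if_pos ha]; exact hc a ha
        · rintro ⟨hc, hna⟩
          refine ⟨fun a ha => ?_, hna⟩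
          have := hc a ha
          rwa [show flipOut I ψ a = ψ a from if_pos ha] at this
      rw [heq]
      exact isMeagre_preimage (flipHomeo I).continuous (flipHomeo I).isOpenMap h1
    have h3 : ¬ IsMeagre cyl :=
      not_isMeagre_of_isOpen' hcylopen ⟨χ₀, fun a _ => rfl⟩
    have h4 : ¬ cyl ⊆ (cyl \ A) ∪ (cyl \ flipOut I ⁻¹' A) := by
      intro hsub
      exact h3 ((isMeagre_union' h1 h2).mono hsub)
    rw [Set.not_subset] at h4
    obtain ⟨ψ, hψcyl, hψnot⟩ := h4
    rw [mem_union, not_or] at hψnot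
    have hψA : ψ ∈ A := by
      by_contra hc
      exact hψnot.1 ⟨hψcyl, hc⟩
    have hψA' : flipOut I ψ ∈ A := by
      by_contra hc
      exact hψnot.2 ⟨hψcyl, hc⟩
    have hX : {n | ψ n = true} ∈ Filter.map f F := (mem_toCantor _ _).mp hψA
    have hX' : {n | flipOut I ψ n = true} ∈ Filter.map f F := (mem_toCantor _ _).mp hψA'
    refine ⟨_, Filter.inter_mem hX hX', Set.Finite.subset I.finite_toSet ?_⟩
    rintro n ⟨hn1, hn2⟩
    simp only [mem_setOf_eq] at hn1 hn2
    by_contra hnI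
    rw [Finset.mem_coe] at hnI
    have hfl : flipOut I ψ n = !ψ n := if_neg hnI
    rw [hfl, hn1] at hn2
    simp at hn2
end

section
/- Assume the continuum hypothesis. Then there exists a mad family 𝒜 = {A_α : α < ω₁} on ω such that for every X ⊆ ω with X ∉ F(𝒜) ∪ I(𝒜), there exists α < ω₁ such that for all β > α both A_β ∖ X and A_β ∩ X are infinite. -/
open Set Filter

/-- recursively chosen increasing sequence with `seqA S j ∈ S j`. -/
noncomputable def seqA (S : ℕ → Set ℕ) : ℕ → ℕ
  | 0 => sInf (S 0)
  | j+1 => sInf (S (j+1) ∩ Set.Ioi (seqA S j))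

variable {S : ℕ → Set ℕ}

lemma seqA_mem_succ (hS : ∀ j, (S j).Infinite) (j : ℕ) :
    seqA S (j+1) ∈ S (j+1) ∩ Set.Ioi (seqA S j) := by
  apply Nat.sInf_mem
  obtain ⟨b, hb, hb2⟩ := (hS (j+1)).exists_gt (seqA S j)
  exact ⟨b, hb, hb2⟩

lemma seqA_mem (hS : ∀ j, (S j).Infinite) (j : ℕ) : seqA S j ∈ S j := by
  cases j with
  | zero => exact Nat.sInf_mem (hS 0).nonempty
  | succ j => exact (seqA_mem_succ hS j).1

lemma seqA_strictMono (hS : ∀ j, (S j).Infinite) : StrictMono (seqA S) :=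
  strictMono_nat_of_lt_succ fun j => (seqA_mem_succ hS j).2

/-- The core diagonalization lemma. -/
lemma core (B X : ℕ → Set ℕ) (hBinf : ∀ n, (B n).Infinite)
    (hB : ∀ m n, B m = B n ∨ (B m ∩ B n).Finite)
    (hBr : (Set.range B).Infinite) :
    ∃ A : Set ℕ, A.Infinite ∧ (∀ n, (A ∩ B n).Finite) ∧
      ∀ k, (∀ n : ℕ, (X k \ ⋃ i ∈ Finset.range n, B i).Infinite ∧
              ((X k)ᶜ \ ⋃ i ∈ Finset.range n, B i).Infinite) →
        (A ∩ X k).Infinite ∧ (A \ X k).Infinite := by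
  classical
  set Act : ℕ → Prop := fun k => ∀ n : ℕ, (X k \ ⋃ i ∈ Finset.range n, B i).Infinite ∧
      ((X k)ᶜ \ ⋃ i ∈ Finset.range n, B i).Infinite with hActdef
  have fresh : ∀ j : ℕ, ∃ m, ∀ i, i ≤ j → B m ≠ B i := by
    intro j
    have hfin : (B '' {i | i ≤ j}).Finite := (Set.finite_Iic j).image B
    have hns : ¬ (Set.range B ⊆ B '' {i | i ≤ j}) := fun h => hBr (hfin.subset h)
    obtain ⟨y, hy, hy2⟩ := Set.not_subset.1 hns
    obtain ⟨m, rfl⟩ := hy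
    exact ⟨m, fun i hi he => hy2 ⟨i, hi, he.symm⟩⟩
  choose fm hfm using fresh
  set Y : ℕ → Set ℕ := fun j =>
    if Act j.unpair.1 then (if j.unpair.2 % 2 = 0 then X j.unpair.1 else (X j.unpair.1)ᶜ)
    else B (fm j) with hYdef
  set S : ℕ → Set ℕ := fun j => Y j \ ⋃ i ∈ Finset.range (j+1), B i with hSdef
  have hS : ∀ j, (S j).Infinite := by
    intro j
    by_cases h : Act j.unpair.1
    · by_cases h2 : j.unpair.2 % 2 = 0
      · have hSj : S j = X j.unpair.1 \ ⋃ i ∈ Finset.range (j+1), B i := by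
          simp only [hSdef, hYdef]; rw [if_pos h, if_pos h2]
        rw [hSj]; exact (h (j+1)).1
      · have hSj : S j = (X j.unpair.1)ᶜ \ ⋃ i ∈ Finset.range (j+1), B i := by
          simp only [hSdef, hYdef]; rw [if_pos h, if_neg h2]
        rw [hSj]; exact (h (j+1)).2
    · have hfin : (B (fm j) ∩ ⋃ i ∈ Finset.range (j+1), B i).Finite := by
        rw [Set.inter_iUnion₂]
        apply Set.Finite.biUnion (Finset.finite_toSet _)
        intro i hi
        rcases hB (fm j) i with he | hf
        · exact absurd he (hfm j i (Nat.lt_succ_iff.1 (Finset.mem_range.1 hi)))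
        · exact hf
      have h3 : (B (fm j) \ (B (fm j) ∩ ⋃ i ∈ Finset.range (j+1), B i)).Infinite :=
        (hBinf (fm j)).diff hfin
      refine h3.mono ?_
      intro x hx
      simp only [S, Y, if_neg h, Set.mem_diff] at *
      exact ⟨hx.1, fun hm => hx.2 ⟨hx.1, hm⟩⟩
  set a : ℕ → ℕ := seqA S with hadef
  have hmem := seqA_mem hS
  have hinj : Function.Injective a := (seqA_strictMono hS).injective
  have hnotB : ∀ j i, i ≤ j → a j ∉ B i := by
    intro j i hij hmemB
    have := (hmem j).2
    exact this (Set.mem_biUnion (Finset.mem_range.2 (Nat.lt_succ_of_le hij)) hmemB)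
  refine ⟨Set.range a, Set.infinite_range_of_injective hinj, ?_, ?_⟩
  · intro n
    have hsub : Set.range a ∩ B n ⊆ a '' Set.Iio n := by
      rintro x ⟨⟨j, rfl⟩, hxB⟩
      rcases lt_or_ge j n with h | h
      · exact ⟨j, h, rfl⟩
      · exact absurd hxB (hnotB j n h)
    exact ((Set.finite_Iio n).image a).subset hsub
  · intro k hk
    constructor
    · apply Set.infinite_of_injective_forall_mem
        (f := fun m : ℕ => a (Nat.pair k (2*m)))
      · intro m m' he
        have := hinj he
        have h2 := congrArg (fun x => (Nat.unpair x).2) this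
        simpa using h2
      · intro m
        refine ⟨⟨_, rfl⟩, ?_⟩
        have h1 := (hmem (Nat.pair k (2*m))).1
        rw [hYdef] at h1
        simp only [Nat.unpair_pair] at h1
        rw [if_pos hk, if_pos (Nat.mul_mod_right 2 m)] at h1
        exact h1
    · apply Set.infinite_of_injective_forall_mem
        (f := fun m : ℕ => a (Nat.pair k (2*m+1)))
      · intro m m' he
        have := hinj he
        have h2 := congrArg (fun x => (Nat.unpair x).2) this
        simpa using h2
      · intro m
        refine ⟨⟨_, rfl⟩, ?_⟩
        have h1 := (hmem (Nat.pair k (2*m+1))).1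
        rw [hYdef] at h1
        simp only [Nat.unpair_pair] at h1
        have hodd : ¬ ((2*m+1) % 2 = 0) := by omega
        rw [if_pos hk, if_neg hodd] at h1
        exact h1
universe u

def P (n : ℕ) : Set ℕ := {m | (Nat.unpair m).1 = n}

lemma P_infinite (n : ℕ) : (P n).Infinite := by
  apply Set.infinite_of_injective_forall_mem (f := fun m => Nat.pair n m)
  · intro a b h
    have := congrArg (fun x => (Nat.unpair x).2) h
    simpa using this
  · intro m; simp [P]

lemma P_inter {m n : ℕ} (h : m ≠ n) : P m ∩ P n = ∅ := by
  ext x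
  simp only [P, Set.mem_inter_iff, Set.mem_setOf_eq, Set.mem_empty_iff_false, iff_false]
  rintro ⟨h1, h2⟩
  exact h (h1.symm.trans h2)

lemma P_inj : Function.Injective P := by
  intro m n he
  by_contra h
  have h1 : Nat.pair m 0 ∈ P m := by simp [P]
  rw [he] at h1
  simp only [P, Set.mem_setOf_eq, Nat.unpair_pair] at h1
  exact h h1

def GoodAt (E : Ordinal.{u} → Set ℕ) (α : Ordinal.{u}) (f : Ordinal.{u} → Set ℕ)
    (A : Set ℕ) : Prop :=
  A.Infinite ∧ (∀ β < α, (A ∩ f β).Finite) ∧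
    (Ordinal.omega0 ≤ α → ∀ γ < α,
      (∀ s : Finset (Set ℕ), ↑s ⊆ f '' Set.Iio α →
        (E γ \ ⋃₀ ↑s).Infinite ∧ ((E γ)ᶜ \ ⋃₀ ↑s).Infinite) →
      (A ∩ E γ).Infinite ∧ (A \ E γ).Infinite)

lemma goodAt_congr {E : Ordinal.{u} → Set ℕ} {α : Ordinal.{u}} {f f' : Ordinal.{u} → Set ℕ}
    {A : Set ℕ} (h : ∀ β < α, f β = f' β) (hg : GoodAt E α f A) : GoodAt E α f' A := by
  have him : f '' Set.Iio α = f' '' Set.Iio α := Set.image_congr (fun x hx => h x hx)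
  refine ⟨hg.1, fun β hβ => (h β hβ) ▸ hg.2.1 β hβ, fun hω γ hγ hact => hg.2.2 hω γ hγ ?_⟩
  intro s hs
  exact hact s (him ▸ hs)

open scoped Classical in
noncomputable def Fam (E : Ordinal.{u} → Set ℕ) : Ordinal.{u} → Set ℕ :=
  Ordinal.lt_wf.fix fun α g =>
    if hα : α < Ordinal.omega0 then P (Classical.choose (Ordinal.lt_omega0.1 hα))
    else if h : ∃ A, GoodAt E α (fun β => if hb : β < α then g β hb else ∅) A
      then Classical.choose h else ∅

open scoped Classical in
lemma Fam_eq (E : Ordinal.{u} → Set ℕ) (α : Ordinal.{u}) : Fam E α =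
    if hα : α < Ordinal.omega0 then P (Classical.choose (Ordinal.lt_omega0.1 hα))
    else if h : ∃ A, GoodAt E α (fun β => if hb : β < α then Fam E β else ∅) A
      then Classical.choose h else ∅ := by
  rw [Fam, WellFounded.fix_eq]
open scoped Classical in
lemma Fam_good (E : Ordinal.{u} → Set ℕ) :
    ∀ α : Ordinal.{u}, α < (Cardinal.aleph 1).ord → GoodAt E α (Fam E) (Fam E α) := by
  intro α
  induction α using Ordinal.induction with
  | _ α IH =>
    intro hα
    rcases lt_or_ge α Ordinal.omega0 with hw | hw
    · have hF : Fam E α = P (Classical.choose (Ordinal.lt_omega0.1 hw)) := by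
        rw [Fam_eq, dif_pos hw]
      refine ⟨by rw [hF]; exact P_infinite _, ?_, ?_⟩
      · intro β hβ
        have hβw : β < Ordinal.omega0 := hβ.trans hw
        have hFβ : Fam E β = P (Classical.choose (Ordinal.lt_omega0.1 hβw)) := by
          rw [Fam_eq, dif_pos hβw]
        have h1 := Classical.choose_spec (Ordinal.lt_omega0.1 hw)
        have h2 := Classical.choose_spec (Ordinal.lt_omega0.1 hβw)
        have hne : Classical.choose (Ordinal.lt_omega0.1 hw) ≠
            Classical.choose (Ordinal.lt_omega0.1 hβw) := by
          intro he
          rw [h1, h2, he] at hβ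
          exact lt_irrefl _ hβ
        rw [hF, hFβ, P_inter hne]
        exact Set.finite_empty
      · intro hωα
        exact absurd hw (not_lt.2 hωα)
    · have hIH : ∀ β, β < α → GoodAt E β (Fam E) (Fam E β) :=
        fun β hβ => IH β hβ (hβ.trans hα)
      have hcard : Cardinal.mk (Set.Iio α) ≤ Cardinal.aleph0 := by
        rw [Ordinal.mk_Iio_ordinal]
        have h1 : α.card < Cardinal.aleph 1 := Cardinal.lt_ord.1 hα
        have h2 : α.card ≤ Cardinal.aleph0 := by
          rw [← Cardinal.succ_aleph0] at h1
          exact Order.lt_succ_iff.1 h1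
        calc Cardinal.lift.{u+1} α.card ≤ Cardinal.lift.{u+1} Cardinal.aleph0 :=
              Cardinal.lift_le.2 h2
          _ = Cardinal.aleph0 := Cardinal.lift_aleph0
      haveI : Countable (Set.Iio α) := Cardinal.mk_le_aleph0_iff.1 hcard
      have h0 : (0 : Ordinal) < α := lt_of_lt_of_le Ordinal.omega0_pos hw
      haveI : Nonempty (Set.Iio α) := ⟨⟨0, h0⟩⟩
      obtain ⟨e, he⟩ := exists_surjective_nat (Set.Iio α)
      set B : ℕ → Set ℕ := fun n => Fam E ((e n : Set.Iio α) : Ordinal) with hBdef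
      set X : ℕ → Set ℕ := fun k => E ((e k : Set.Iio α) : Ordinal) with hXdef
      have hBinf : ∀ n, (B n).Infinite := fun n => (hIH _ (e n).2).1
      have hBad : ∀ {β γ : Ordinal.{u}}, β < α → γ < α → β ≠ γ →
          (Fam E β ∩ Fam E γ).Finite := by
        intro β γ hβ hγ hne
        rcases hne.lt_or_gt with h | h
        · exact (Set.inter_comm _ _) ▸ (hIH γ hγ).2.1 β h
        · exact (hIH β hβ).2.1 γ h
      have hB : ∀ m n, B m = B n ∨ (B m ∩ B n).Finite := by
        intro m n
        by_cases hmn : ((e m : Set.Iio α) : Ordinal) = ((e n : Set.Iio α) : Ordinal)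
        · left
          simp only [hBdef, hmn]
        · right
          exact hBad (e m).2 (e n).2 hmn
      have hnat : ∀ n : ℕ, ((n : Ordinal.{u})) < α :=
        fun n => (Ordinal.nat_lt_omega0 n).trans_le hw
      have hPn : ∀ n : ℕ, Fam E ((n : Ordinal.{u})) = P n := by
        intro n
        have hnw : ((n : Ordinal.{u})) < Ordinal.omega0 := Ordinal.nat_lt_omega0 n
        rw [Fam_eq, dif_pos hnw]
        have hcs := Classical.choose_spec (Ordinal.lt_omega0.1 hnw)
        exact congrArg P (Nat.cast_inj.1 hcs).symm
      have hBr : (Set.range B).Infinite := by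
        apply Set.infinite_of_injective_forall_mem (f := fun n : ℕ => P n) P_inj
        intro n
        obtain ⟨m, hm⟩ := he ⟨(n : Ordinal), hnat n⟩
        refine ⟨m, ?_⟩
        simp only [hBdef, hm]
        exact (hPn n).symm ▸ (hPn n)
      obtain ⟨A, hA1, hA2, hA3⟩ := core B X hBinf hB hBr
      have hgood : GoodAt E α (Fam E) A := by
        refine ⟨hA1, ?_, ?_⟩
        · intro β hβ
          obtain ⟨m, hm⟩ := he ⟨β, hβ⟩
          have hFB : Fam E β = B m := by simp only [hBdef, hm]
          rw [hFB]
          exact hA2 m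
        · intro _ γ hγ hact
          obtain ⟨k, hk⟩ := he ⟨γ, hγ⟩
          have hXk : X k = E γ := by simp only [hXdef, hk]
          have hres := hA3 k ?_
          · rwa [hXk] at hres
          · intro n
            have hs : ↑((Finset.range n).image B) ⊆ Fam E '' Set.Iio α := by
              intro x hx
              simp only [Finset.coe_image, Set.mem_image] at hx
              obtain ⟨i, _, rfl⟩ := hx
              exact ⟨((e i : Set.Iio α) : Ordinal), (e i).2, rfl⟩
            have h2 := hact _ hs
            have h3 : ⋃₀ (↑((Finset.range n).image B) : Set (Set ℕ)) =
                ⋃ i ∈ Finset.range n, B i := by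
              rw [Finset.coe_image, Set.sUnion_image]
              simp
            rw [h3] at h2
            rw [hXk]
            exact h2
      have hmask : ∀ β, β < α → Fam E β = (fun β => if _ : β < α then Fam E β else ∅) β :=
        fun β hβ => by simp only []; rw [dif_pos hβ]
      have hex : ∃ A, GoodAt E α (fun β => if _ : β < α then Fam E β else ∅) A :=
        ⟨A, goodAt_congr hmask hgood⟩
      have hFα : Fam E α = Classical.choose hex := by
        rw [Fam_eq, dif_neg (not_lt.2 hw), dif_pos hex]
      have := Classical.choose_spec hex
      rw [← hFα] at this
      exact goodAt_congr (fun β hβ => by show dite _ _ _ = _; rw [dif_pos hβ]) this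
lemma sUnion_finset (s : Finset (Set ℕ)) :
    ⋃₀ (↑s : Set (Set ℕ)) = ⋃ A ∈ s, (A : Set ℕ) := by
  simp [Set.sUnion_eq_biUnion]

lemma mem_madFilter_of {𝒜 : Set (Set ℕ)} {X : Set ℕ} (s : Finset (Set ℕ))
    (hs : ↑s ⊆ 𝒜) (h : (Xᶜ \ ⋃₀ ↑s).Finite) : X ∈ madFilter 𝒜 := by
  have hC : (Xᶜ \ ⋃₀ (↑s : Set (Set ℕ)))ᶜ ∈ (Filter.cofinite : Filter ℕ) := by
    rw [Filter.mem_cofinite, compl_compl]; exact h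
  have hD : (⋂ A ∈ s, (Aᶜ : Set ℕ)) ∈ ⨅ A ∈ 𝒜, 𝓟 (Aᶜ : Set ℕ) := by
    rw [Filter.biInter_finset_mem]
    intro A hA
    exact Filter.mem_iInf_of_mem A (Filter.mem_iInf_of_mem (hs hA) (Filter.mem_principal_self _))
  apply Filter.mem_of_superset (Filter.inter_mem_inf hC hD)
  intro x hx
  by_contra hxX
  have hx1 : x ∈ Xᶜ := hxX
  have hx2 : x ∉ ⋃₀ (↑s : Set (Set ℕ)) := by
    rintro ⟨B, hB, hxB⟩
    have := Set.mem_iInter₂.1 hx.2 B hB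
    exact this hxB
  exact hx.1 ⟨hx1, hx2⟩

lemma exists_finset_of_mem_madFilter {𝒜 : Set (Set ℕ)} {X : Set ℕ}
    (h : X ∈ madFilter 𝒜) : ∃ s : Finset (Set ℕ), ↑s ⊆ 𝒜 ∧ (Xᶜ \ ⋃₀ ↑s).Finite := by
  classical
  rw [madFilter, Filter.mem_inf_iff] at h
  obtain ⟨C, hC, D, hD, hXeq⟩ := h
  rw [Filter.mem_iInf] at hD
  obtain ⟨I, hIfin, V, hV, rfl⟩ := hD
  refine ⟨(hIfin.toFinset.filter (· ∈ 𝒜)), ?_, ?_⟩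
  · intro Y hY
    simp only [Finset.coe_filter, Set.mem_setOf_eq] at hY
    exact hY.2
  · apply (Filter.mem_cofinite.1 hC).subset
    intro x hx
    obtain ⟨hx1, hx2⟩ := hx
    by_contra hxC
    have hxC' : x ∈ C := not_not.1 hxC
    have hx3 : x ∉ ⋂ i, V i := by
      intro hmem
      exact hx1 (hXeq ▸ ⟨hxC', hmem⟩)
    rw [Set.mem_iInter] at hx3
    push_neg at hx3
    obtain ⟨i, hi⟩ := hx3
    by_cases hiA : (i : Set ℕ) ∈ 𝒜
    · have hVi := hV i
      rw [iInf_pos hiA, Filter.mem_principal] at hVi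
      have hxi : x ∈ (i : Set ℕ) := by
        by_contra hxi
        exact hi (hVi hxi)
      apply hx2
      refine ⟨(i : Set ℕ), ?_, hxi⟩
      simp only [Finset.coe_filter, Set.mem_setOf_eq]
      exact ⟨hIfin.mem_toFinset.2 i.2, hiA⟩
    · have hVi := hV i
      rw [iInf_neg hiA, Filter.mem_top] at hVi
      rw [hVi] at hi
      exact hi (Set.mem_univ x)

lemma CH_transfer.{v,w} (h : Cardinal.continuum.{v} = Cardinal.aleph.{v} 1) :
    Cardinal.continuum.{w} = Cardinal.aleph.{w} 1 := by
  have h1 := congrArg (Cardinal.lift.{w}) h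
  rw [Cardinal.lift_continuum, Cardinal.lift_aleph, Ordinal.lift_one] at h1
  have h2 : Cardinal.lift.{v} Cardinal.continuum.{w} =
      Cardinal.lift.{v} (Cardinal.aleph.{w} 1) := by
    rw [Cardinal.lift_continuum, Cardinal.lift_aleph, Ordinal.lift_one]
    exact h1
  exact Cardinal.lift_inj.1 h2

theorem stmt17' (hCH : Cardinal.continuum.{u} = Cardinal.aleph.{u} 1) :
    ∃ A : {o : Ordinal.{u} // o < (Cardinal.aleph.{u} 1).ord} → Set ℕ,
      Function.Injective A ∧ MadFamily (Set.range A) ∧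
      ∀ X : Set ℕ, X ∉ madFilter (Set.range A) → X ∉ madIdeal (Set.range A) →
        ∃ α : {o : Ordinal.{u} // o < (Cardinal.aleph.{u} 1).ord},
          ∀ β : {o : Ordinal.{u} // o < (Cardinal.aleph.{u} 1).ord}, α < β →
            (A β \ X).Infinite ∧ (A β ∩ X).Infinite := by
  classical
  obtain ⟨eqv⟩ : Nonempty ({o : Ordinal.{u} // o < (Cardinal.aleph.{u} 1).ord} ≃ Set ℕ) := by
    rw [← Cardinal.lift_mk_eq', Cardinal.lift_uzero]
    have h1 : Cardinal.mk {o : Ordinal // o < (Cardinal.aleph 1).ord} =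
        Cardinal.lift.{u+1} (Cardinal.aleph.{u} 1) := by
      have h2 := Ordinal.mk_Iio_ordinal ((Cardinal.aleph 1).ord)
      rw [Cardinal.card_ord] at h2
      exact h2
    rw [h1, Cardinal.lift_aleph, Ordinal.lift_one, Cardinal.mk_set, Cardinal.mk_nat,
      Cardinal.two_power_aleph0, Cardinal.lift_continuum]
    exact (CH_transfer hCH).symm
  set E : Ordinal.{u} → Set ℕ :=
    fun o => if h : o < (Cardinal.aleph 1).ord then eqv ⟨o, h⟩ else ∅ with hEdef
  set A : {o : Ordinal // o < (Cardinal.aleph 1).ord} → Set ℕ :=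
    fun o => Fam E o.1 with hAdef
  have good : ∀ o : {o : Ordinal // o < (Cardinal.aleph 1).ord},
      GoodAt E o.1 (Fam E) (Fam E o.1) := fun o => Fam_good E o.1 o.2
  have hEsurj : ∀ X : Set ℕ, ∃ γ, ∃ hγ : γ < (Cardinal.aleph 1).ord, E γ = X := by
    intro X
    refine ⟨(eqv.symm X).1, (eqv.symm X).2, ?_⟩
    show (if h : (eqv.symm X).1 < (Cardinal.aleph 1).ord
      then eqv ⟨(eqv.symm X).1, h⟩ else ∅) = X
    rw [dif_pos (eqv.symm X).2]
    have h3 : (⟨(eqv.symm X).1, (eqv.symm X).2⟩ :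
        {o : Ordinal // o < (Cardinal.aleph 1).ord}) = eqv.symm X := rfl
    rw [h3, Equiv.apply_symm_apply]
  have hlim : Order.IsSuccLimit ((Cardinal.aleph 1).ord) :=
    Cardinal.isSuccLimit_ord (Cardinal.aleph0_le_aleph 1)
  have hωord : Ordinal.omega0 < (Cardinal.aleph 1).ord := by
    rw [Cardinal.lt_ord, Ordinal.card_omega0]
    exact Cardinal.aleph0_lt_aleph_one
  have hpair : ∀ o1 o2 : {o : Ordinal // o < (Cardinal.aleph 1).ord}, o1.1 ≠ o2.1 →
      (A o1 ∩ A o2).Finite := by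
    intro o1 o2 hne
    rcases hne.lt_or_gt with h | h
    · rw [Set.inter_comm]
      exact (good o2).2.1 o1.1 h
    · exact (good o1).2.1 o2.1 h
  have hinf : ∀ o, (A o).Infinite := fun o => (good o).1
  have hinj : Function.Injective A := by
    intro o1 o2 he
    by_contra hne
    have hne' : o1.1 ≠ o2.1 := fun h => hne (Subtype.ext h)
    have h1 := hpair o1 o2 hne'
    rw [he, Set.inter_self] at h1
    exact hinf o2 h1
  have hsplit : ∀ X : Set ℕ, X ∉ madFilter (Set.range A) → X ∉ madIdeal (Set.range A) →
      ∃ α : {o : Ordinal // o < (Cardinal.aleph 1).ord},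
        ∀ β : {o : Ordinal // o < (Cardinal.aleph 1).ord}, α < β →
          (A β \ X).Infinite ∧ (A β ∩ X).Infinite := by
    intro X hXF hXI
    obtain ⟨γ, hγ, hEγ⟩ := hEsurj X
    have hα0 : max (Order.succ γ) Ordinal.omega0 < (Cardinal.aleph 1).ord :=
      max_lt (hlim.succ_lt hγ) hωord
    refine ⟨⟨_, hα0⟩, ?_⟩
    intro β hβ
    have hβ1 : max (Order.succ γ) Ordinal.omega0 < β.1 := hβ
    have hω : Ordinal.omega0 ≤ β.1 := ((le_max_right _ _).trans hβ1.le)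
    have hγβ : γ < β.1 := lt_of_lt_of_le (Order.lt_succ γ) ((le_max_left _ _).trans hβ1.le)
    have hact : ∀ s : Finset (Set ℕ), ↑s ⊆ Fam E '' Set.Iio β.1 →
        (E γ \ ⋃₀ ↑s).Infinite ∧ ((E γ)ᶜ \ ⋃₀ ↑s).Infinite := by
      intro s hs
      have hsub : ↑s ⊆ Set.range A := by
        intro x hx
        obtain ⟨δ, hδ, rfl⟩ := hs hx
        exact ⟨⟨δ, hδ.trans β.2⟩, rfl⟩
      constructor
      · rw [hEγ]
        by_contra hfin
        rw [Set.not_infinite] at hfin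
        exact hXI ⟨s, hsub, by rwa [← sUnion_finset]⟩
      · rw [hEγ]
        by_contra hfin
        rw [Set.not_infinite] at hfin
        exact hXF (mem_madFilter_of s hsub hfin)
    have hg := (good β).2.2 hω γ hγβ hact
    rw [hEγ] at hg
    exact ⟨hg.2, hg.1⟩
  have hnat' : ∀ n : ℕ, ((n : Ordinal.{u})) < (Cardinal.aleph 1).ord :=
    fun n => (Ordinal.nat_lt_omega0 n).trans hωord
  refine ⟨A, hinj, ⟨⟨?_, ?_, ?_⟩, ?_⟩, hsplit⟩
  · -- range infinite
    apply Set.infinite_of_injective_forall_mem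
      (f := fun n : ℕ => A ⟨(n : Ordinal), hnat' n⟩)
    · intro m n hmn
      have := hinj hmn
      rw [Subtype.mk_eq_mk] at this
      exact Nat.cast_inj.1 this
    · intro n
      exact ⟨_, rfl⟩
  · rintro Y ⟨o, rfl⟩
    exact hinf o
  · rintro Y ⟨o1, rfl⟩ Z ⟨o2, rfl⟩ hne
    exact hpair o1 o2 (fun h => hne (congrArg A (Subtype.ext h)))
  · -- maximality
    intro X hXinf
    by_contra hno
    push_neg at hno
    have hfinint : ∀ o, (X ∩ A o).Finite :=
      fun o => hno (A o) ⟨o, rfl⟩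
    by_cases hI : X ∈ madIdeal (Set.range A)
    · obtain ⟨s, hs, hfin⟩ := hI
      have hXsub : X ⊆ (X \ ⋃ B ∈ s, (B : Set ℕ)) ∪ ⋃ B ∈ s, (X ∩ B) := by
        intro x hx
        by_cases hm : x ∈ ⋃ B ∈ s, (B : Set ℕ)
        · right
          simp only [Set.mem_iUnion] at hm ⊢
          obtain ⟨B0, hB0, hxB⟩ := hm
          exact ⟨B0, hB0, hx, hxB⟩
        · left
          exact ⟨hx, hm⟩
      apply hXinf
      apply Set.Finite.subset _ hXsub
      apply hfin.union
      apply Set.Finite.biUnion (s.finite_toSet)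
      intro B0 hB0
      obtain ⟨o, rfl⟩ := hs hB0
      exact hfinint o
    · by_cases hF : X ∈ madFilter (Set.range A)
      · obtain ⟨s, hs, hfin⟩ := exists_finset_of_mem_madFilter hF
        set idx : Set ℕ → Ordinal.{u} := fun Y => if h : ∃ o : {o : Ordinal //
          o < (Cardinal.aleph 1).ord}, A o = Y then (Classical.choose h).1 else 0 with hidxdef
        set t : Finset Ordinal.{u} := s.image idx with htdef
        have hidx : ∀ Y ∈ s, ∃ o : {o : Ordinal.{u} // o < (Cardinal.aleph 1).ord},
            A o = Y ∧ o.1 ≤ t.sup id := by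
          intro Y hY
          have hex : ∃ o : {o : Ordinal.{u} // o < (Cardinal.aleph 1).ord}, A o = Y := by
            obtain ⟨o, ho⟩ := hs hY
            exact ⟨o, ho⟩
          refine ⟨Classical.choose hex, Classical.choose_spec hex, ?_⟩
          have hidxY : idx Y = (Classical.choose hex).1 := by
            show (if h : _ then _ else _) = _
            rw [dif_pos hex]
          calc (Classical.choose hex).1 = id (idx Y) := hidxY.symm
            _ ≤ t.sup id := Finset.le_sup (Finset.mem_image_of_mem idx hY)
        have htlt : t.sup id < (Cardinal.aleph 1).ord := by
          rw [Finset.sup_lt_iff (pos_iff_ne_zero.2 hlim.ne_bot)]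
          intro b hb
          rw [htdef] at hb
          obtain ⟨Y, hY, rfl⟩ := Finset.mem_image.1 hb
          show idx Y < _
          by_cases hex : ∃ o : {o : Ordinal.{u} // o < (Cardinal.aleph 1).ord}, A o = Y
          · have hidxY : idx Y = (Classical.choose hex).1 := by
              show (if h : _ then _ else _) = _
              rw [dif_pos hex]
            rw [hidxY]
            exact (Classical.choose hex).2
          · have hidxY : idx Y = 0 := by
              show (if h : _ then _ else _) = _
              rw [dif_neg hex]
            rw [hidxY]
            exact pos_iff_ne_zero.2 hlim.ne_bot
        set β : {o : Ordinal.{u} // o < (Cardinal.aleph 1).ord} :=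
          ⟨Order.succ (t.sup id), hlim.succ_lt htlt⟩ with hβdef
        have hfin2 : (A β ∩ ⋃₀ (↑s : Set (Set ℕ))).Finite := by
          have heq : A β ∩ ⋃₀ (↑s : Set (Set ℕ)) = ⋃ Y ∈ s, (A β ∩ Y) := by
            rw [sUnion_finset]
            ext x
            simp only [Set.mem_inter_iff, Set.mem_iUnion]
            tauto
          rw [heq]
          apply Set.Finite.biUnion s.finite_toSet
          intro Y hY
          obtain ⟨o, rfl, hle⟩ := hidx Y hY
          have hlt : o.1 < β.1 := lt_of_le_of_lt hle (Order.lt_succ _)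
          exact hpair β o (fun h => absurd (h ▸ hlt) (lt_irrefl _))
        have hdiff : (A β \ ⋃₀ (↑s : Set (Set ℕ))).Infinite := by
          apply ((hinf β).diff hfin2).mono
          intro x hx
          exact ⟨hx.1, fun hm => hx.2 ⟨hx.1, hm⟩⟩
        have hsub2 : (A β \ ⋃₀ (↑s : Set (Set ℕ))) \ (Xᶜ \ ⋃₀ (↑s : Set (Set ℕ))) ⊆
            X ∩ A β := by
          intro x hx
          refine ⟨?_, hx.1.1⟩
          by_contra hxX
          exact hx.2 ⟨hxX, hx.1.2⟩
        exact ((hdiff.diff hfin).mono hsub2) (hfinint β)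
      · obtain ⟨α, hα⟩ := hsplit X hF hI
        have hβlt : α.1 < Order.succ α.1 := Order.lt_succ _
        have hsucclt : Order.succ α.1 < (Cardinal.aleph 1).ord := hlim.succ_lt α.2
        have := (hα ⟨Order.succ α.1, hsucclt⟩ hβlt).2
        exact this (by rw [Set.inter_comm]; exact hno _ ⟨_, rfl⟩)



/-- (CH) There is a mad family `𝒜 = {A_α : α < ω₁}` such that for every `X ∉ F(𝒜) ∪ I(𝒜)`
there is `α < ω₁` such that `A_β \ X` and `A_β ∩ X` are infinite for all `β > α`. -/
theorem stmt17 (hCH : Cardinal.continuum = Cardinal.aleph 1) :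
    ∃ A : {o : Ordinal // o < (Cardinal.aleph 1).ord} → Set ℕ,
      Function.Injective A ∧ MadFamily (Set.range A) ∧
      ∀ X : Set ℕ, X ∉ madFilter (Set.range A) → X ∉ madIdeal (Set.range A) →
        ∃ α : {o : Ordinal // o < (Cardinal.aleph 1).ord},
          ∀ β : {o : Ordinal // o < (Cardinal.aleph 1).ord}, α < β →
            (A β \ X).Infinite ∧ (A β ∩ X).Infinite :=
  stmt17' (CH_transfer hCH)
end
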